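/- (Theorem 4) Let (G_k,y) be a weakly reversible mass-action system admitting a positive complex-balanced equilibrium x* ∈ ℝ^n_{>0}. Let x ∈ ℝ^n_{>0} with z := ln(x/x*) ∉ S^⊥, and let f ∈ ℝ^n be such that u · f < 0 for every chain graph G_ℰ with z ∈ C_ℰ and every u ∈ C_ℰ \ S^⊥. Then z · f < 0. -/

import Mathlib

open Matrix BigOperators Finset

variable {V : Type*}

/-- Directed reachability in the digraph with edge set `F`. -/
def dReach (F : Finset (V × V)) : V → V → Prop :=
  Relation.ReflTransGen fun a b => (a, b) ∈ F

/-- Reachability in the underlying undirected graph of the digraph with edge set `F`. -/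
def uReach (F : Finset (V × V)) : V → V → Prop :=
  Relation.ReflTransGen fun a b => (a, b) ∈ F ∨ (b, a) ∈ F

/-- A digraph is strongly connected if every vertex reaches every other vertex. -/
def StronglyConnected (F : Finset (V × V)) : Prop :=
  ∀ i j : V, dReach F i j

/-- A simple digraph has no self-loops. -/
def NoSelfLoops (F : Finset (V × V)) : Prop :=
  ∀ e ∈ F, e.1 ≠ e.2

/-- The edge set `F` contains a directed cycle. -/
def HasDirectedCycle (F : Finset (V × V)) : Prop :=
  ∃ v : V, Relation.TransGen (fun a b => (a, b) ∈ F) v v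

/-- The Laplacian matrix `A_k` of the labeled digraph `(V, F, k)`:
`(A_k)_{i,j} = k_{j→i}` if `(j→i) ∈ F`, `(A_k)_{i,i} = -∑_{(i→j)∈F} k_{i→j}`, and `0` otherwise. -/
noncomputable def LaplacianMatrix [Fintype V] [DecidableEq V]
    (F : Finset (V × V)) (k : V × V → ℝ) : Matrix V V ℝ :=
  Matrix.of fun i j =>
    if i = j then -(∑ e ∈ F.filter (fun e => e.1 = i), k e)
    else if (j, i) ∈ F then k (j, i) else 0

/-- `T` is a directed spanning tree of the strongly connected digraph `E`, rooted at `i`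
and directed towards the root: no directed cycle, and every vertex except `i`
is the source of exactly one edge. -/
def IsSpanningTreeTo [DecidableEq V] (E : Finset (V × V)) (i : V)
    (T : Finset (V × V)) : Prop :=
  T ⊆ E ∧ ¬ HasDirectedCycle T ∧
    ∀ j : V, j ≠ i → (T.filter (fun e => e.1 = j)).card = 1

open scoped Classical in
/-- The tree constant `(K_k)_i = ∑_{T ∈ T_i} ∏_{(j→j')∈T} k_{j→j'}`. -/
noncomputable def treeConst [Fintype V] [DecidableEq V]
    (E : Finset (V × V)) (k : V × V → ℝ) (i : V) : ℝ :=
  ∑ T ∈ E.powerset.filter (fun T => IsSpanningTreeTo E i T), ∏ e ∈ T, k e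

/-- The incidence matrix of the digraph with edge set `F`: in the column of edge `(j→j')`,
entry `-1` in row `j`, entry `+1` in row `j'`, and `0` elsewhere. -/
noncomputable def incidence [DecidableEq V] (F : Finset (V × V)) :
    Matrix V {e : V × V // e ∈ F} ℝ :=
  Matrix.of fun i e =>
    (if (e : V × V).2 = i then (1 : ℝ) else 0) - (if (e : V × V).1 = i then (1 : ℝ) else 0)

/-- Every connected component of the digraph is strongly connected: whenever `j` is reachable
from `i` in the underlying undirected graph, it is reachable by a directed path. -/
def WeaklyReversible {V : Type*} (F : Finset (V × V)) : Prop :=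
  ∀ i j : V, uReach F i j → dReach F i j

/-- The underlying undirected simple graph of the digraph with edge set `F`. -/
def toSimpleGraph {V : Type*} (F : Finset (V × V)) : SimpleGraph V :=
  SimpleGraph.fromRel fun a b => (a, b) ∈ F

/-- `F` is an auxiliary digraph for the digraph `E`: its connected components are directed
trees on the vertex sets of the connected components of `E`. That is, `F` has no self-loops
and no pair of opposite edges, its underlying undirected graph is acyclic (a forest), and
its connected components coincide with those of `E`. -/
def IsAuxiliary {V : Type*} (E F : Finset (V × V)) : Prop :=
  NoSelfLoops F ∧ (∀ a b : V, (a, b) ∈ F → (b, a) ∉ F) ∧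
    (toSimpleGraph F).IsAcyclic ∧ (∀ i j : V, uReach F i j ↔ uReach E i j)

/-- `F` is a chain graph for `E`: an auxiliary digraph each of whose components is a chain
`i_1 → i_2 → … → i_m` on the corresponding component of `E`; equivalently, an auxiliary
digraph in which every vertex has out-degree at most one and in-degree at most one. -/
def IsChainGraphOn {V : Type*} [DecidableEq V] (E F : Finset (V × V)) : Prop :=
  IsAuxiliary E F ∧ (∀ v : V, (F.filter (fun e => e.1 = v)).card ≤ 1) ∧
    (∀ v : V, (F.filter (fun e => e.2 = v)).card ≤ 1)

/-- `F` is a star graph for `E`: an auxiliary digraph each of whose components is a star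
`i_1 → i_m, …, i_{m-1} → i_m` on the corresponding component of `E`; equivalently, an
auxiliary digraph in which all edges of one component share the same target (the root). -/
def IsStarGraphOn {V : Type*} (E F : Finset (V × V)) : Prop :=
  IsAuxiliary E F ∧ ∀ e ∈ F, ∀ e' ∈ F, uReach F e.2 e'.2 → e.2 = e'.2

/-- `T` is a directed spanning tree, rooted at `i` and directed towards the root, of the
connected component of `i` in the digraph `E`: no directed cycle, every vertex of the
component except `i` is the source of exactly one edge, and vertices outside the component
are sources of no edge. -/
def IsCompSpanningTreeTo {V : Type*} [DecidableEq V] (E : Finset (V × V)) (i : V)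
    (T : Finset (V × V)) : Prop :=
  T ⊆ E ∧ ¬ HasDirectedCycle T ∧
    (∀ j : V, j ≠ i → uReach E j i → (T.filter (fun e => e.1 = j)).card = 1) ∧
    (∀ j : V, ¬ uReach E j i → (T.filter (fun e => e.1 = j)).card = 0)

open scoped Classical in
/-- The tree constants, given componentwise: on each component `V^λ`,
`(K_k)_i = ∑_{T ∈ T_i} ∏_{(j→j')∈T} k_{j→j'}` with `T_i` the set of directed spanning trees
of the component rooted at `i`, directed towards the root. -/
noncomputable def treeConstM {V : Type*} [Fintype V] [DecidableEq V]
    (E : Finset (V × V)) (k : V × V → ℝ) (i : V) : ℝ :=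
  ∑ T ∈ E.powerset.filter (fun T => IsCompSpanningTreeTo E i T), ∏ e ∈ T, k e

/-- The (generalized) monomial `x^{y(i)} = ∏_j x_j^{(y(i))_j}` (real exponentiation). -/
noncomputable def monomial {V : Type*} [Fintype V] {n : ℕ}
    (y : V → Fin n → ℝ) (x : Fin n → ℝ) (i : V) : ℝ :=
  ∏ j : Fin n, x j ^ y i j

/-- The matrix `Y ∈ ℝ^{n × V}` whose columns are the complexes `y(i)`. -/
noncomputable def complexMatrix {V : Type*} {n : ℕ} (y : V → Fin n → ℝ) :
    Matrix (Fin n) V ℝ :=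
  Matrix.of fun j i => y i j

/-- The mass-action vector field `f_k(x) = Y A_k x^Y`. -/
noncomputable def massActionField {V : Type*} [Fintype V] [DecidableEq V] {n : ℕ}
    (E : Finset (V × V)) (k : V × V → ℝ) (y : V → Fin n → ℝ) (x : Fin n → ℝ) :
    Fin n → ℝ :=
  (complexMatrix y).mulVec ((LaplacianMatrix E k).mulVec (monomial y x))


section ChainAux

variable {V : Type*} {α : Type*} [LinearOrder α]

lemma uReach_symm {F : Finset (V × V)} {a b : V} (h : uReach F a b) : uReach F b a :=
  by
    induction h with
    | refl => exact Relation.ReflTransGen.refl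
    | tail _ hs ih => exact Relation.ReflTransGen.head (hs.symm.imp id id) ih

open scoped Classical in
/-- The chain graph: edge from each vertex to the κ-least strictly-κ-larger vertex
in its component. -/
noncomputable def chainF [Fintype V] (E : Finset (V × V)) (κ : V → α) : Finset (V × V) :=
  Finset.univ.filter (fun e => uReach E e.1 e.2 ∧ κ e.1 < κ e.2 ∧
    ∀ c, uReach E e.1 c → κ e.1 < κ c → κ e.2 ≤ κ c)

variable [Fintype V] {E : Finset (V × V)} {κ : V → α}

lemma mem_chainF {e : V × V} : e ∈ chainF E κ ↔ uReach E e.1 e.2 ∧ κ e.1 < κ e.2 ∧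
    ∀ c, uReach E e.1 c → κ e.1 < κ c → κ e.2 ≤ κ c := by
  classical
  simp [chainF]

lemma chainF_pred_unique (hκ : Function.Injective κ) {a a' b : V}
    (h : (a, b) ∈ chainF E κ) (h' : (a', b) ∈ chainF E κ) : a = a' := by
  obtain ⟨hr, hlt, hmin⟩ := mem_chainF.mp h
  obtain ⟨hr', hlt', hmin'⟩ := mem_chainF.mp h'
  by_contra hne
  have key : ∀ x x' : V, uReach E x b → (κ x < κ b) →
      (∀ c, uReach E x c → κ x < κ c → κ b ≤ κ c) → uReach E x' b → κ x' < κ b →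
      κ x < κ x' → False := by
    intro x x' hx hxb hxm hx' hx'b hxx'
    have hxc : uReach E x x' := hx.trans (uReach_symm hx')
    exact absurd (hxm x' hxc hxx') (not_le.mpr hx'b)
  rcases lt_trichotomy (κ a) (κ a') with h1 | h1 | h1
  · exact key a a' hr hlt hmin hr' hlt' h1
  · exact hne (hκ h1)
  · exact key a' a hr' hlt' hmin' hr hlt h1

lemma chainF_succ_unique (hκ : Function.Injective κ) {a b b' : V}
    (h : (a, b) ∈ chainF E κ) (h' : (a, b') ∈ chainF E κ) : b = b' := by
  obtain ⟨hr, hlt, hmin⟩ := mem_chainF.mp h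
  obtain ⟨hr', hlt', hmin'⟩ := mem_chainF.mp h'
  exact hκ (le_antisymm (hmin b' hr' hlt') (hmin' b hr hlt))

lemma uReach_chainF_to_E {a b : V} (h : uReach (chainF E κ) a b) : uReach E a b := by
  induction h with
  | refl => exact Relation.ReflTransGen.refl
  | tail _ hstep ih =>
      rcases hstep with hs | hs
      · exact ih.trans (mem_chainF.mp hs).1
      · exact ih.trans (uReach_symm (mem_chainF.mp hs).1)

open scoped Classical in
noncomputable def aboveSet (E : Finset (V × V)) (κ : V → α) (a : V) : Finset V :=
  Finset.univ.filter (fun c => uReach E a c ∧ κ a < κ c)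

lemma mem_aboveSet {a c : V} : c ∈ aboveSet E κ a ↔ uReach E a c ∧ κ a < κ c := by
  classical
  simp [aboveSet]

lemma uReach_chainF_top (a : V) :
    ∃ t, uReach (chainF E κ) a t ∧ uReach E a t ∧ aboveSet E κ t = ∅ := by
  generalize hcard : (aboveSet E κ a).card = m
  induction m using Nat.strong_induction_on generalizing a with
  | _ m ih =>
    by_cases hemp : aboveSet E κ a = ∅
    · exact ⟨a, Relation.ReflTransGen.refl, Relation.ReflTransGen.refl, hemp⟩
    · obtain ⟨b, hb, hbmin⟩ := Finset.exists_min_image (aboveSet E κ a) κ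
        (Finset.nonempty_of_ne_empty hemp)
      obtain ⟨hbr, hbl⟩ := mem_aboveSet.mp hb
      have hedge : (a, b) ∈ chainF E κ := mem_chainF.mpr
        ⟨hbr, hbl, fun c hc hlc => hbmin c (mem_aboveSet.mpr ⟨hc, hlc⟩)⟩
      have hss : aboveSet E κ b ⊂ aboveSet E κ a := by
        constructor
        · intro c hc
          obtain ⟨h1, h2⟩ := mem_aboveSet.mp hc
          exact mem_aboveSet.mpr ⟨hbr.trans h1, hbl.trans h2⟩
        · intro hcon
          exact absurd (mem_aboveSet.mp (hcon hb)).2 (lt_irrefl _)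
      obtain ⟨t, ht1, ht2, ht3⟩ := ih (aboveSet E κ b).card
        (hcard ▸ Finset.card_lt_card hss) b rfl
      have hab : uReach (chainF E κ) a b := Relation.ReflTransGen.single (Or.inl hedge)
      exact ⟨t, hab.trans ht1, hbr.trans ht2, ht3⟩

lemma uReach_E_to_chainF (hκ : Function.Injective κ) {a b : V} (h : uReach E a b) :
    uReach (chainF E κ) a b := by
  obtain ⟨t, ht1, ht2, ht3⟩ := uReach_chainF_top (E := E) (κ := κ) a
  obtain ⟨t', ht1', ht2', ht3'⟩ := uReach_chainF_top (E := E) (κ := κ) b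
  have htt' : uReach E t t' := (uReach_symm ht2).trans (h.trans ht2')
  have : t = t' := by
    by_contra hne
    rcases lt_trichotomy (κ t) (κ t') with h1 | h1 | h1
    · have : t' ∈ aboveSet E κ t := mem_aboveSet.mpr ⟨htt', h1⟩
      simp [ht3] at this
    · exact hne (hκ h1)
    · have : t ∈ aboveSet E κ t' := mem_aboveSet.mpr ⟨uReach_symm htt', h1⟩
      simp [ht3'] at this
  exact ht1.trans (uReach_symm (this ▸ ht1'))

lemma adj_toSimpleGraph {F : Finset (V × V)} {a b : V} :
    (toSimpleGraph F).Adj a b ↔ a ≠ b ∧ ((a, b) ∈ F ∨ (b, a) ∈ F) :=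
  SimpleGraph.fromRel_adj _ a b

lemma acyclic_of_mono {F : Finset (V × V)} (hmono : ∀ e ∈ F, κ e.1 < κ e.2)
    (hpred : ∀ a a' b : V, (a, b) ∈ F → (a', b) ∈ F → a = a') :
    (toSimpleGraph F).IsAcyclic := by
  intro v c hc
  classical
  obtain ⟨u, hu, humax⟩ := Finset.exists_max_image c.support.toFinset κ
    ⟨v, List.mem_toFinset.mpr c.start_mem_support⟩
  have hu' : u ∈ c.support := List.mem_toFinset.mp hu
  obtain ⟨c', hcyc, hsupp⟩ : ∃ c' : (toSimpleGraph F).Walk u u,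
      c'.IsCycle ∧ ∀ x ∈ c'.support, κ x ≤ κ u := by
    refine ⟨c.rotate u hu', hc.rotate hu', ?_⟩
    intro x hx
    apply humax
    apply List.mem_toFinset.mpr
    rw [SimpleGraph.Walk.support_eq_cons (c.rotate u hu')] at hx
    rcases List.mem_cons.mp hx with h | h
    · exact h ▸ hu'
    · exact List.mem_of_mem_tail ((SimpleGraph.Walk.support_rotate c u hu').mem_iff.mp h)
  have hpredu : ∀ x : V, (toSimpleGraph F).Adj u x → x ∈ c'.support → (x, u) ∈ F := by
    intro x hadj hx
    rcases (adj_toSimpleGraph.mp hadj).2 with h | h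
    · have := hmono _ h
      have hle := hsupp x hx
      simp only at this
      exact absurd (lt_of_lt_of_le this hle) (lt_irrefl _)
    · exact h
  revert hcyc hsupp
  cases c' with
  | nil => intro hcyc _; exact SimpleGraph.Walk.IsCycle.not_of_nil hcyc
  | cons hadj p =>
    rename_i w
    intro hcyc hsupp
    rw [SimpleGraph.Walk.cons_isCycle_iff] at hcyc
    obtain ⟨hpath, hedge⟩ := hcyc
    have hwu : u ≠ w := fun h => (toSimpleGraph F).irrefl (h ▸ hadj)
    obtain ⟨b, hadj', q, hq⟩ := SimpleGraph.Walk.exists_eq_cons_of_ne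
      (fun h : u = w => hwu h) p.reverse
    have hwb : w ≠ b := by
      intro h
      apply hedge
      have : s(u, b) ∈ p.reverse.edges := hq ▸ SimpleGraph.Walk.edges_cons hadj' q ▸
        List.mem_cons_self
      rw [SimpleGraph.Walk.edges_reverse, List.mem_reverse] at this
      subst h
      exact this
    have hwsupp : w ∈ (SimpleGraph.Walk.cons hadj p).support := by
      rw [SimpleGraph.Walk.support_cons]
      exact List.mem_cons.mpr (Or.inr p.start_mem_support)
    have hbsupp : b ∈ (SimpleGraph.Walk.cons hadj p).support := by
      rw [SimpleGraph.Walk.support_cons]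
      apply List.mem_cons.mpr
      right
      have : b ∈ p.reverse.support := by
        rw [hq, SimpleGraph.Walk.support_cons]
        exact List.mem_cons.mpr (Or.inr q.start_mem_support)
      rwa [SimpleGraph.Walk.support_reverse, List.mem_reverse] at this
    have h1 : (w, u) ∈ F := hpredu w hadj hwsupp
    have h2 : (b, u) ∈ F := hpredu b hadj' hbsupp
    exact hwb (hpred w b u h1 h2)

lemma isChainGraphOn_chainF [DecidableEq V] (hκ : Function.Injective κ) :
    IsChainGraphOn E (chainF E κ) := by
  have hmono : ∀ e ∈ chainF E κ, κ e.1 < κ e.2 := fun e he => (mem_chainF.mp he).2.1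
  have hpred : ∀ a a' b : V, (a, b) ∈ chainF E κ → (a', b) ∈ chainF E κ → a = a' :=
    fun a a' b h h' => chainF_pred_unique hκ h h'
  refine ⟨⟨?_, ?_, ?_, ?_⟩, ?_, ?_⟩
  · exact fun e he h => absurd (h ▸ hmono e he) (lt_irrefl _)
  · intro a b h h'
    exact absurd ((hmono _ h).trans (hmono _ h')) (lt_irrefl _)
  · exact acyclic_of_mono hmono hpred
  · exact fun i j => ⟨uReach_chainF_to_E, uReach_E_to_chainF hκ⟩
  · intro v
    rw [Finset.card_le_one]
    rintro ⟨a, b⟩ h ⟨a', b'⟩ h'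
    rw [Finset.mem_filter] at h h'
    obtain ⟨h, rfl⟩ := h
    obtain ⟨h', rfl⟩ := h'
    exact Prod.ext rfl (chainF_succ_unique hκ h h')
  · intro v
    rw [Finset.card_le_one]
    rintro ⟨a, b⟩ h ⟨a', b'⟩ h'
    rw [Finset.mem_filter] at h h'
    obtain ⟨h, rfl⟩ := h
    obtain ⟨h', rfl⟩ := h'
    exact Prod.ext (chainF_pred_unique hκ h h') rfl

end ChainAux

/-- (Theorem 4) Let `(G_k, y)` be a weakly reversible mass-action system admitting a positive
complex-balanced equilibrium `x*`. Let `x > 0` with `z := ln(x/x*) ∉ S^⊥`, and let `f` be such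
that `u ⬝ f < 0` for every chain graph `G_ℰ` with `z ∈ C_ℰ` and every `u ∈ C_ℰ \ S^⊥`.
Then `z ⬝ f < 0`. -/
theorem binomial_differential_inclusion_lyapunov
    {V : Type*} [Fintype V] [DecidableEq V] {n : ℕ}
    (E : Finset (V × V)) (hloop : NoSelfLoops E)
    (k : V × V → ℝ) (hk : ∀ e ∈ E, 0 < k e)
    (y : V → Fin n → ℝ) (hyinj : Function.Injective y) (hynn : ∀ i j, 0 ≤ y i j)
    (hwr : WeaklyReversible E)
    (xs : Fin n → ℝ) (hxs : ∀ j, 0 < xs j)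
    (hcb : (LaplacianMatrix E k).mulVec (monomial y xs) = 0)
    (x : Fin n → ℝ) (hx : ∀ j, 0 < x j)
    (z : Fin n → ℝ) (hz : z = fun j => Real.log (x j / xs j))
    (hzS : ¬ (∀ s ∈ LinearMap.range (complexMatrix y * incidence E).mulVecLin,
      ∑ j : Fin n, z j * s j = 0))
    (f : Fin n → ℝ)
    (hf : ∀ F : Finset (V × V), IsChainGraphOn E F →
      (∀ e ∈ F, 0 ≤ ∑ j : Fin n, (y e.2 j - y e.1 j) * z j) →
      ∀ u : Fin n → ℝ,
        (∀ e ∈ F, 0 ≤ ∑ j : Fin n, (y e.2 j - y e.1 j) * u j) →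
        ¬ (∀ s ∈ LinearMap.range (complexMatrix y * incidence E).mulVecLin,
            ∑ j : Fin n, u j * s j = 0) →
        ∑ j : Fin n, u j * f j < 0) :
    ∑ j : Fin n, z j * f j < 0 := by
  classical
  set g : V → ℝ := fun i => ∑ j : Fin n, y i j * z j with hg
  set κ : V → Lex (ℝ × ℕ) := fun a => toLex (g a, (Fintype.equivFin V a : ℕ)) with hκdef
  have hκ : Function.Injective κ := by
    intro a b h
    have h2 : ((Fintype.equivFin V a : ℕ)) = ((Fintype.equivFin V b : ℕ)) :=
      congrArg (fun p : Lex (ℝ × ℕ) => (ofLex p).2) h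
    exact (Fintype.equivFin V).injective (Fin.val_injective h2)
  have hzcond : ∀ e ∈ chainF E κ, 0 ≤ ∑ j : Fin n, (y e.2 j - y e.1 j) * z j := by
    intro e he
    have hlt : κ e.1 < κ e.2 := (mem_chainF.mp he).2.1
    have hge : g e.1 ≤ g e.2 := by
      rw [hκdef] at hlt
      rcases Prod.Lex.lt_iff.mp hlt with h | h
      · exact le_of_lt h
      · exact le_of_eq h.1
    have hsum : ∑ j : Fin n, (y e.2 j - y e.1 j) * z j = g e.2 - g e.1 := by
      rw [hg]
      simp only [← Finset.sum_sub_distrib, sub_mul]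
    rw [hsum]
    linarith
  have := hf (chainF E κ) (isChainGraphOn_chainF hκ) hzcond z hzcond hzS
  exact this
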